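/- Let C = (c_{xy}) ∈ [-1,1]^{2×2} with θ_{xy} = arccos(c_{xy}) ∈ [0,π], and suppose max{|θ₁₁ − θ₁₂|, |θ₂₁ − θ₂₂|} ≤ min{θ₁₁ + θ₁₂, θ₂₁ + θ₂₂, 2π − (θ₁₁ + θ₁₂), 2π − (θ₂₁ + θ₂₂)}. Then: (a) for every PSD completion X ∈ E₄ of C (with X_{x,2+y} = c_{xy}), the angle θ₃₄ = arccos(X₃₄) lies in the interval [max{|θ₁₁ − θ₁₂|, |θ₂₁ − θ₂₂|}, min{θ₁₁ + θ₁₂, θ₂₁ + θ₂₂, 2π − (θ₁₁ + θ₁₂), 2π − (θ₂₁ + θ₂₂)}]; and (b) conversely, for every θ in this interval there exists a PSD completion X ∈ E₄ of C with arccos(X₃₄) = θ. -/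

import Mathlib

open Matrix Real

private lemma myPsdDetNonneg {n : Type*} [Fintype n] [DecidableEq n] {A : Matrix n n ℝ}
    (hA : A.PosSemidef) : 0 ≤ A.det := by
  rw [hA.1.det_eq_prod_eigenvalues]
  exact Finset.prod_nonneg fun i _ => hA.eigenvalues_nonneg i

private lemma myArccosLe {x y : ℝ} (h : x ≤ y) : Real.arccos y ≤ Real.arccos x := by
  unfold Real.arccos
  have := Real.monotone_arcsin h
  linarith

private lemma auxA (α β c : ℝ) (hα : α ∈ Set.Icc 0 π) (hβ : β ∈ Set.Icc 0 π)
    (hdet : 0 ≤ 1 - (Real.cos α)^2 - (Real.cos β)^2 - c^2 + 2 * Real.cos α * Real.cos β * c) :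
    |α - β| ≤ Real.arccos c ∧ Real.arccos c ≤ α + β ∧ Real.arccos c ≤ 2*π - (α+β) := by
  obtain ⟨hα0, hα1⟩ := hα
  obtain ⟨hβ0, hβ1⟩ := hβ
  have hsa : 0 ≤ Real.sin α := Real.sin_nonneg_of_nonneg_of_le_pi hα0 hα1
  have hsb : 0 ≤ Real.sin β := Real.sin_nonneg_of_nonneg_of_le_pi hβ0 hβ1
  have key : 0 ≤ (Real.cos α * Real.cos β + Real.sin α * Real.sin β - c) *
      (c - (Real.cos α * Real.cos β - Real.sin α * Real.sin β)) := by
    nlinarith [Real.sin_sq_add_cos_sq α, Real.sin_sq_add_cos_sq β]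
  have h1 : c ≤ Real.cos α * Real.cos β + Real.sin α * Real.sin β := by
    by_contra h
    push_neg at h
    nlinarith [mul_nonneg hsa hsb]
  have h2 : Real.cos α * Real.cos β - Real.sin α * Real.sin β ≤ c := by
    by_contra h
    push_neg at h
    nlinarith [mul_nonneg hsa hsb]
  have habs : |α - β| ≤ π := abs_le.2 ⟨by linarith, by linarith⟩
  have hlow : |α - β| ≤ Real.arccos c := by
    have h3 : c ≤ Real.cos |α - β| := by rw [Real.cos_abs, Real.cos_sub]; exact h1
    calc |α - β| = Real.arccos (Real.cos |α - β|) :=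
          (Real.arccos_cos (abs_nonneg _) habs).symm
      _ ≤ Real.arccos c := myArccosLe h3
  have hm0 : 0 ≤ min (α + β) (2*π - (α + β)) := le_min (by linarith) (by linarith [Real.pi_pos])
  have hmπ : min (α + β) (2*π - (α + β)) ≤ π := by
    rcases le_total (α + β) π with h | h
    · exact le_trans (min_le_left _ _) h
    · exact le_trans (min_le_right _ _) (by linarith)
  have hcm : Real.cos (min (α + β) (2*π - (α + β))) =
      Real.cos α * Real.cos β - Real.sin α * Real.sin β := by
    rcases le_total (α + β) (2*π - (α + β)) with h | h
    · rw [min_eq_left h, Real.cos_add]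
    · rw [min_eq_right h, Real.cos_sub, Real.cos_two_pi, Real.sin_two_pi, Real.cos_add]; ring
  have hup : Real.arccos c ≤ min (α + β) (2*π - (α + β)) := by
    calc Real.arccos c ≤ Real.arccos (Real.cos (min (α + β) (2*π - (α + β)))) :=
          myArccosLe (by rw [hcm]; exact h2)
      _ = _ := Real.arccos_cos hm0 hmπ
  exact ⟨hlow, le_trans hup (min_le_left _ _), le_trans hup (min_le_right _ _)⟩

private lemma auxB (α β t : ℝ) (hα : α ∈ Set.Icc 0 π) (hβ : β ∈ Set.Icc 0 π)
    (ht : t ∈ Set.Icc 0 π) (h1 : |α - β| ≤ t) (h2 : t ≤ α + β) (h3 : t ≤ 2*π - (α + β)) :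
    (Real.cos β - Real.cos α * Real.cos t)^2 ≤ (1 - (Real.cos α)^2) * (1 - (Real.cos t)^2) := by
  obtain ⟨hα0, hα1⟩ := hα; obtain ⟨hβ0, hβ1⟩ := hβ; obtain ⟨ht0, ht1⟩ := ht
  obtain ⟨h1a, h1b⟩ := abs_le.1 h1
  have e1 : Real.cos β ≤ Real.cos α * Real.cos t + Real.sin α * Real.sin t := by
    have hb1 : |α - t| ≤ β := abs_le.2 ⟨by linarith, by linarith⟩
    have := Real.cos_le_cos_of_nonneg_of_le_pi (abs_nonneg (α - t)) hβ1 hb1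
    rw [Real.cos_abs, Real.cos_sub] at this
    linarith
  have e2 : Real.cos α * Real.cos t - Real.sin α * Real.sin t ≤ Real.cos β := by
    rcases le_total (α + t) π with h | h
    · have := Real.cos_le_cos_of_nonneg_of_le_pi hβ0 h (by linarith)
      rw [Real.cos_add] at this
      linarith
    · have hb2 : β ≤ 2*π - (α + t) := by linarith
      have := Real.cos_le_cos_of_nonneg_of_le_pi hβ0 (by linarith) hb2
      rw [Real.cos_sub, Real.cos_two_pi, Real.sin_two_pi, Real.cos_add] at this
      nlinarith
  nlinarith [Real.sin_sq_add_cos_sq α, Real.sin_sq_add_cos_sq t,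
    mul_nonneg (Real.sin_nonneg_of_nonneg_of_le_pi hα0 hα1)
      (Real.sin_nonneg_of_nonneg_of_le_pi ht0 ht1)]

private lemma auxC (α β t : ℝ) (hα : α ∈ Set.Icc 0 π) (hβ : β ∈ Set.Icc 0 π)
    (ht : t ∈ Set.Icc 0 π) (h1 : |α - β| ≤ t) (h2 : t ≤ α + β) (h3 : t ≤ 2*π - (α + β)) :
    Real.cos α * Real.cos t +
      ((Real.cos β - Real.cos α * Real.cos t) / Real.sin t) * Real.sin t = Real.cos β := by
  rcases eq_or_ne (Real.sin t) 0 with hs | hs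
  · rw [hs, mul_zero, add_zero]
    have hsq : (Real.cos t - 1) * (Real.cos t + 1) = 0 := by
      nlinarith [Real.sin_sq_add_cos_sq t]
    rcases mul_eq_zero.1 hsq with h | h
    · have hct : Real.cos t = 1 := by linarith
      have ht0 : t = 0 := by
        rw [← Real.arccos_cos ht.1 ht.2, hct, Real.arccos_one]
      subst ht0
      have : α = β := by
        have := abs_le.1 h1
        have : α - β = 0 := by cases' this with l r; linarith
        linarith
      rw [this, hct, mul_one]
    · have hct : Real.cos t = -1 := by linarith
      have htπ : t = π := by
        rw [← Real.arccos_cos ht.1 ht.2, hct, Real.arccos_neg_one]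
      subst htπ
      have hab : β = π - α := by linarith
      rw [hab, Real.cos_pi_sub, hct]
      ring
  · field_simp
    ring


private lemma auxGram (a b p q u v t : ℝ) :
    let B : Matrix (Fin 3) (Fin 4) ℝ := !![a, b, 1, Real.cos t; p, q, 0, Real.sin t; u, v, 0, 0]
    (Bᴴ * B) 0 0 = a^2 + p^2 + u^2 ∧ (Bᴴ * B) 1 1 = b^2 + q^2 + v^2 ∧
    (Bᴴ * B) 2 2 = 1 ∧ (Bᴴ * B) 3 3 = Real.cos t^2 + Real.sin t^2 ∧
    (Bᴴ * B) 0 2 = a ∧ (Bᴴ * B) 0 3 = a * Real.cos t + p * Real.sin t ∧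
    (Bᴴ * B) 1 2 = b ∧ (Bᴴ * B) 1 3 = b * Real.cos t + q * Real.sin t ∧
    (Bᴴ * B) 2 3 = Real.cos t := by
  refine ⟨?_, ?_, ?_, ?_, ?_, ?_, ?_, ?_, ?_⟩ <;>
    simp [Matrix.mul_apply, Fin.sum_univ_three, Matrix.conjTranspose_apply,
      Matrix.vecHead, Matrix.vecTail, Matrix.transpose_apply] <;>
    ring_nf <;> nlinarith [Real.sin_sq_add_cos_sq t]

/-- `X ∈ E₄` is a PSD completion of the `2 × 2` matrix `C`. -/
def IsPSDCompletion22 (X : Matrix (Fin 4) (Fin 4) ℝ)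
    (C : Matrix (Fin 2) (Fin 2) ℝ) : Prop :=
  X.PosSemidef ∧ (∀ i, X i i = 1) ∧
  X 0 2 = C 0 0 ∧ X 0 3 = C 0 1 ∧ X 1 2 = C 1 0 ∧ X 1 3 = C 1 1

set_option maxHeartbeats 1600000 in
theorem stmt14 (C : Matrix (Fin 2) (Fin 2) ℝ)
    (hC : ∀ x y, C x y ∈ Set.Icc (-1 : ℝ) 1)
    (θ : Fin 2 → Fin 2 → ℝ) (hθ : ∀ x y, θ x y = Real.arccos (C x y))
    (hint : max |θ 0 0 - θ 0 1| |θ 1 0 - θ 1 1| ≤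
      min (min (θ 0 0 + θ 0 1) (θ 1 0 + θ 1 1))
          (min (2 * π - (θ 0 0 + θ 0 1)) (2 * π - (θ 1 0 + θ 1 1)))) :
    (∀ X, IsPSDCompletion22 X C →
       max |θ 0 0 - θ 0 1| |θ 1 0 - θ 1 1| ≤ Real.arccos (X 2 3) ∧
       Real.arccos (X 2 3) ≤
         min (min (θ 0 0 + θ 0 1) (θ 1 0 + θ 1 1))
             (min (2 * π - (θ 0 0 + θ 0 1)) (2 * π - (θ 1 0 + θ 1 1)))) ∧
    (∀ t : ℝ, max |θ 0 0 - θ 0 1| |θ 1 0 - θ 1 1| ≤ t →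
       t ≤ min (min (θ 0 0 + θ 0 1) (θ 1 0 + θ 1 1))
             (min (2 * π - (θ 0 0 + θ 0 1)) (2 * π - (θ 1 0 + θ 1 1))) →
       ∃ X, IsPSDCompletion22 X C ∧ Real.arccos (X 2 3) = t) := by
  have hθmem : ∀ x y, θ x y ∈ Set.Icc 0 π := fun x y => by
    rw [hθ]; exact ⟨Real.arccos_nonneg _, Real.arccos_le_pi _⟩
  have hcosθ : ∀ x y, Real.cos (θ x y) = C x y := fun x y => by
    rw [hθ]; exact Real.cos_arccos (hC x y).1 (hC x y).2
  constructor
  · -- Part (a)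
    rintro X ⟨hpsd, hdiag, h02, h03, h12, h13⟩
    have hsymm : ∀ i j, X j i = X i j := fun i j => by simpa using hpsd.1.apply i j
    have row : ∀ (i : Fin 4) (x : Fin 2), X i 2 = C x 0 → X i 3 = C x 1 →
        |θ x 0 - θ x 1| ≤ Real.arccos (X 2 3) ∧ Real.arccos (X 2 3) ≤ θ x 0 + θ x 1 ∧
          Real.arccos (X 2 3) ≤ 2*π - (θ x 0 + θ x 1) := by
      intro i x hi2 hi3
      have hsub := hpsd.submatrix ![i, 2, 3]
      have hdet := myPsdDetNonneg hsub
      rw [Matrix.det_fin_three] at hdet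
      simp only [Matrix.submatrix_apply, Matrix.cons_val_zero, Matrix.cons_val_one,
        Matrix.head_cons, Matrix.cons_val_two, Matrix.tail_cons] at hdet
      rw [hdiag i, hdiag 2, hdiag 3, hi2, hi3, hsymm i 2, hsymm i 3, hsymm 2 3, hi2, hi3] at hdet
      refine auxA (θ x 0) (θ x 1) (X 2 3) (hθmem x 0) (hθmem x 1) ?_
      rw [hcosθ x 0, hcosθ x 1]
      nlinarith [hdet]
    obtain ⟨r0a, r0b, r0c⟩ := row 0 0 h02 h03
    obtain ⟨r1a, r1b, r1c⟩ := row 1 1 h12 h13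
    exact ⟨max_le r0a r1a, le_min (le_min r0b r1b) (le_min r0c r1c)⟩
  · -- Part (b)
    intro t ht1 ht2
    have l1 : |θ 0 0 - θ 0 1| ≤ t := le_trans (le_max_left _ _) ht1
    have l2 : |θ 1 0 - θ 1 1| ≤ t := le_trans (le_max_right _ _) ht1
    have u1 : t ≤ θ 0 0 + θ 0 1 := le_trans ht2 (le_trans (min_le_left _ _) (min_le_left _ _))
    have u2 : t ≤ θ 1 0 + θ 1 1 := le_trans ht2 (le_trans (min_le_left _ _) (min_le_right _ _))
    have u3 : t ≤ 2*π - (θ 0 0 + θ 0 1) := by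
      have := le_trans ht2 (le_trans (min_le_right _ _) (min_le_left _ _)); linarith
    have u4 : t ≤ 2*π - (θ 1 0 + θ 1 1) := by
      have := le_trans ht2 (le_trans (min_le_right _ _) (min_le_right _ _)); linarith
    have ht0 : 0 ≤ t := le_trans (abs_nonneg _) l1
    have htπ : t ≤ π := by linarith
    have htmem : t ∈ Set.Icc 0 π := ⟨ht0, htπ⟩
    set y0 : ℝ := (C 0 1 - C 0 0 * Real.cos t) / Real.sin t with hy0
    set y1 : ℝ := (C 1 1 - C 1 0 * Real.cos t) / Real.sin t with hy1
    have hB0 := auxB (θ 0 0) (θ 0 1) t (hθmem 0 0) (hθmem 0 1) htmem l1 u1 u3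
    have hB1 := auxB (θ 1 0) (θ 1 1) t (hθmem 1 0) (hθmem 1 1) htmem l2 u2 u4
    rw [hcosθ 0 0, hcosθ 0 1] at hB0
    rw [hcosθ 1 0, hcosθ 1 1] at hB1
    have hst : Real.sin t ^ 2 = 1 - Real.cos t ^ 2 := by
      nlinarith [Real.sin_sq_add_cos_sq t]
    have hn0 : 0 ≤ 1 - (C 0 0)^2 - y0^2 := by
      rcases eq_or_ne (Real.sin t) 0 with hs | hs
      · rw [hy0, hs, div_zero]
        nlinarith [(hC 0 0).1, (hC 0 0).2]
      · have hst2 : 0 < Real.sin t ^ 2 := by positivity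
        have : (C 0 1 - C 0 0 * Real.cos t)^2 / Real.sin t ^2 ≤ 1 - (C 0 0)^2 := by
          rw [div_le_iff₀ hst2, hst]; linarith [hB0]
        rw [hy0, div_pow]
        linarith
    have hn1 : 0 ≤ 1 - (C 1 0)^2 - y1^2 := by
      rcases eq_or_ne (Real.sin t) 0 with hs | hs
      · rw [hy1, hs, div_zero]
        nlinarith [(hC 1 0).1, (hC 1 0).2]
      · have hst2 : 0 < Real.sin t ^ 2 := by positivity
        have : (C 1 1 - C 1 0 * Real.cos t)^2 / Real.sin t ^2 ≤ 1 - (C 1 0)^2 := by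
          rw [div_le_iff₀ hst2, hst]; linarith [hB1]
        rw [hy1, div_pow]
        linarith
    set z0 : ℝ := Real.sqrt (1 - (C 0 0)^2 - y0^2) with hz0
    set z1 : ℝ := Real.sqrt (1 - (C 1 0)^2 - y1^2) with hz1
    have hz0sq : z0^2 = 1 - (C 0 0)^2 - y0^2 := Real.sq_sqrt hn0
    have hz1sq : z1^2 = 1 - (C 1 0)^2 - y1^2 := Real.sq_sqrt hn1
    have corr0 : C 0 0 * Real.cos t + y0 * Real.sin t = C 0 1 := by
      have := auxC (θ 0 0) (θ 0 1) t (hθmem 0 0) (hθmem 0 1) htmem l1 u1 u3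
      rw [hcosθ 0 0, hcosθ 0 1] at this
      rw [hy0]; exact this
    have corr1 : C 1 0 * Real.cos t + y1 * Real.sin t = C 1 1 := by
      have := auxC (θ 1 0) (θ 1 1) t (hθmem 1 0) (hθmem 1 1) htmem l2 u2 u4
      rw [hcosθ 1 0, hcosθ 1 1] at this
      rw [hy1]; exact this
    obtain ⟨g00, g11, g22, g33, g02, g03, g12, g13, g23⟩ :=
      auxGram (C 0 0) (C 1 0) y0 y1 z0 z1 t
    set B : Matrix (Fin 3) (Fin 4) ℝ :=
      !![C 0 0, C 1 0, 1, Real.cos t; y0, y1, 0, Real.sin t; z0, z1, 0, 0] with hBdef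
    refine ⟨Bᴴ * B, ⟨Matrix.posSemidef_conjTranspose_mul_self B, ?_, ?_, ?_, ?_, ?_⟩, ?_⟩
    · intro i
      fin_cases i
      · show (Bᴴ * B) 0 0 = 1
        rw [g00]; nlinarith [hz0sq]
      · show (Bᴴ * B) 1 1 = 1
        rw [g11]; nlinarith [hz1sq]
      · show (Bᴴ * B) 2 2 = 1
        exact g22
      · show (Bᴴ * B) 3 3 = 1
        rw [g33]; linarith [Real.sin_sq_add_cos_sq t]
    · exact g02
    · rw [g03]; exact corr0
    · exact g12
    · rw [g13]; exact corr1
    · rw [g23]; exact Real.arccos_cos ht0 htπ
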